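/- (Navarrete's theorem) For every positive integer s and every integer n ≥ s, the number a_{1,s}(n) of permutations π of {1,…,n} such that π_{i+1} − π_i ≠ s for all 1 ≤ i ≤ n−1 equals Σ_{j=0}^{n−s} (−1)^j · C(n−s, j) · (n−j)!. -/

import Mathlib

namespace NavarreteAux

open Finset Equiv

lemma coe_succAbove {m : ℕ} (q : Fin (m + 1)) (z : Fin m) :
    (q.succAbove z : ℕ) = if (z : ℕ) < (q : ℕ) then (z : ℕ) else (z : ℕ) + 1 := by
  rcases lt_or_ge z.castSucc q with h | h
  · rw [Fin.succAbove_of_castSucc_lt _ _ h]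
    have h' : (z : ℕ) < (q : ℕ) := h
    simp [h']
  · rw [Fin.succAbove_of_le_castSucc _ _ h]
    have h' : (q : ℕ) ≤ (z : ℕ) := h
    simp [Nat.not_lt.mpr h']

lemma coe_succAbove_ne {m : ℕ} (q : Fin (m + 1)) (z : Fin m) :
    (q.succAbove z : ℕ) ≠ (q : ℕ) := fun h => Fin.succAbove_ne q z (Fin.ext h)

lemma option_some_removeNone {α β : Type*} (e : Option α ≃ Option β)
    (he : e none = none) (x : α) : e (some x) = some (e.removeNone x) := by
  have hx : ∃ x', e (some x) = some x' := by
    cases h : e (some x) with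
    | none => exact absurd (e.injective (h.trans he.symm)) (by simp)
    | some y => exact ⟨y, rfl⟩
  exact (Equiv.removeNone_some e hx).symm

lemma optionCongr_removeNone {α β : Type*} (e : Option α ≃ Option β)
    (he : e none = none) : (e.removeNone).optionCongr = e := by
  ext x
  cases x with
  | none => simp [he]
  | some y => simp [option_some_removeNone e he y]

/-- Delete the value `v` (at its position) from the permutation `σ`. -/
def Fmap {m : ℕ} (v : Fin (m + 1)) (σ : Equiv.Perm (Fin (m + 1))) : Equiv.Perm (Fin m) :=
  Equiv.removeNone ((finSuccEquiv' v).symm.trans (σ.trans (finSuccEquiv' (σ v))))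

/-- Insert the value `v` at position `(ρ a₀) + 1` into the permutation `ρ`. -/
def Gmap {m : ℕ} (v : Fin (m + 1)) (a₀ : Fin m) (ρ : Equiv.Perm (Fin m)) :
    Equiv.Perm (Fin (m + 1)) :=
  (finSuccEquiv' v).trans ((ρ.optionCongr).trans (finSuccEquiv' ((ρ a₀).succ)).symm)

lemma Fmap_aux_none {m : ℕ} (v : Fin (m + 1)) (σ : Equiv.Perm (Fin (m + 1))) :
    ((finSuccEquiv' v).symm.trans (σ.trans (finSuccEquiv' (σ v)))) none = none := by
  simp [Equiv.trans_apply, finSuccEquiv'_symm_none, finSuccEquiv'_at]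

lemma Fmap_spec {m : ℕ} (v : Fin (m + 1)) (σ : Equiv.Perm (Fin (m + 1))) (x : Fin m) :
    σ (v.succAbove x) = (σ v).succAbove (Fmap v σ x) := by
  have h := option_some_removeNone _ (Fmap_aux_none v σ) x
  simp only [Equiv.trans_apply, finSuccEquiv'_symm_some] at h
  have h2 := congrArg (finSuccEquiv' (σ v)).symm h
  simpa only [Equiv.symm_apply_apply, finSuccEquiv'_symm_some, Fmap] using h2

lemma Gmap_succAbove {m : ℕ} (v : Fin (m + 1)) (a₀ : Fin m) (ρ : Equiv.Perm (Fin m))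
    (z : Fin m) : Gmap v a₀ ρ (v.succAbove z) = ((ρ a₀).succ).succAbove (ρ z) := by
  simp [Gmap, Equiv.trans_apply, finSuccEquiv'_succAbove, Equiv.optionCongr_apply,
    finSuccEquiv'_symm_some]

lemma Gmap_self {m : ℕ} (v : Fin (m + 1)) (a₀ : Fin m) (ρ : Equiv.Perm (Fin m)) :
    Gmap v a₀ ρ v = (ρ a₀).succ := by
  simp [Gmap, Equiv.trans_apply, finSuccEquiv'_at, Equiv.optionCongr_apply,
    finSuccEquiv'_symm_none]

lemma Fmap_Gmap {m : ℕ} (v : Fin (m + 1)) (a₀ : Fin m) (ρ : Equiv.Perm (Fin m)) :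
    Fmap v (Gmap v a₀ ρ) = ρ := by
  unfold Fmap
  rw [Gmap_self v a₀ ρ]
  have h : (finSuccEquiv' v).symm.trans ((Gmap v a₀ ρ).trans (finSuccEquiv' ((ρ a₀).succ)))
      = ρ.optionCongr := by
    ext x
    simp [Gmap, Equiv.trans_apply]
  rw [h, Equiv.removeNone_optionCongr]

lemma Gmap_Fmap {m : ℕ} (v : Fin (m + 1)) (a₀ : Fin m) (σ : Equiv.Perm (Fin (m + 1)))
    (h : ((Fmap v σ) a₀).succ = σ v) : Gmap v a₀ (Fmap v σ) = σ := by
  unfold Gmap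
  rw [h]
  have h2 : (Fmap v σ).optionCongr
      = (finSuccEquiv' v).symm.trans (σ.trans (finSuccEquiv' (σ v))) :=
    optionCongr_removeNone _ (Fmap_aux_none v σ)
  rw [h2]
  ext x
  simp [Equiv.trans_apply]

/-- The adjacency constraints: for every `a ∈ T`, the value `a + s` sits at the
position right after the value `a` (here `σ` is the value-to-position map). -/
def Cons (s : ℕ) (T : Finset ℕ) {n : ℕ} (σ : Equiv.Perm (Fin n)) : Prop :=
  ∀ i j : Fin n, (i : ℕ) ∈ T → (j : ℕ) = (i : ℕ) + s → (σ j : ℕ) = (σ i : ℕ) + 1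

instance (s : ℕ) (T : Finset ℕ) (n : ℕ) :
    DecidablePred (fun σ : Equiv.Perm (Fin n) => Cons s T σ) := fun σ => by
  unfold Cons; infer_instance

lemma key (s : ℕ) (hs : 1 ≤ s) :
    ∀ (k n : ℕ) (T : Finset ℕ), T.card = k → (∀ a ∈ T, a + s < n) →
      (Finset.univ.filter fun σ : Equiv.Perm (Fin n) => Cons s T σ).card
        = (n - k).factorial := by
  intro k
  induction k with
  | zero =>
    intro n T hcard hT
    rw [Finset.card_eq_zero] at hcard
    subst hcard
    have : ∀ σ : Equiv.Perm (Fin n), Cons s (∅ : Finset ℕ) σ := by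
      intro σ i j hi
      simp at hi
    rw [Finset.filter_true_of_mem (fun σ _ => this σ), Finset.card_univ,
      Fintype.card_perm, Fintype.card_fin, Nat.sub_zero]
  | succ k ih =>
    intro n T hcard hT
    have hne : T.Nonempty := Finset.card_pos.mp (by omega)
    set a := T.max' hne with ha_def
    have haT : a ∈ T := T.max'_mem hne
    have hvn : a + s < n := hT a haT
    obtain ⟨m, rfl⟩ : ∃ m, n = m + 1 := ⟨n - 1, by omega⟩
    have ham : a < m := by omega
    set v : Fin (m + 1) := ⟨a + s, hvn⟩ with hv_def
    set a₁ : Fin (m + 1) := ⟨a, by omega⟩ with ha₁_def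
    set a₀ : Fin m := ⟨a, ham⟩ with ha₀_def
    have hT'card : (T.erase a).card = k := by
      rw [Finset.card_erase_of_mem haT]; omega
    have hlt : ∀ b ∈ T.erase a, b < a := fun b hb =>
      lt_of_le_of_ne (T.le_max' b (Finset.mem_of_mem_erase hb)) (Finset.ne_of_mem_erase hb)
    have hbound' : ∀ b ∈ T.erase a, b + s < m := by
      intro b hb
      have := hlt b hb
      omega
    have step : (Finset.univ.filter fun σ : Equiv.Perm (Fin (m + 1)) => Cons s T σ).card
        = (Finset.univ.filter fun ρ : Equiv.Perm (Fin m) => Cons s (T.erase a) ρ).card := by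
      apply Finset.card_nbij' (fun σ => Fmap v σ) (fun ρ => Gmap v a₀ ρ)
      · -- forward membership
        intro σ hσmem
        rw [Finset.mem_coe, Finset.mem_filter] at hσmem
        rw [Finset.mem_coe, Finset.mem_filter]
        beta_reduce
        refine ⟨Finset.mem_univ _, ?_⟩
        have hσ := hσmem.2
        intro i j hiT' hij
        have hbT : (i : ℕ) ∈ T := Finset.mem_of_mem_erase hiT'
        have hba : (i : ℕ) < a := hlt _ hiT'
        have hci' : (v.succAbove i : ℕ) = (i : ℕ) := by
          rw [coe_succAbove, if_pos]
          show (i : ℕ) < a + s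
          omega
        have hcj' : (v.succAbove j : ℕ) = (j : ℕ) := by
          rw [coe_succAbove, if_pos]
          show (j : ℕ) < a + s
          omega
        have hcons := hσ (v.succAbove i) (v.succAbove j)
          (by rw [hci']; exact hbT) (by rw [hci', hcj']; exact hij)
        rw [Fmap_spec v σ i, Fmap_spec v σ j] at hcons
        have h1 := coe_succAbove (σ v) (Fmap v σ i)
        have h2 := coe_succAbove (σ v) (Fmap v σ j)
        have hne1 := coe_succAbove_ne (σ v) (Fmap v σ i)
        have hne2 := coe_succAbove_ne (σ v) (Fmap v σ j)
        rw [h1] at hne1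
        rw [h2] at hne2
        rw [h1, h2] at hcons
        split_ifs at hcons hne1 hne2 <;> omega
      · -- backward membership
        intro ρ hρmem
        rw [Finset.mem_coe, Finset.mem_filter] at hρmem
        rw [Finset.mem_coe, Finset.mem_filter]
        refine ⟨Finset.mem_univ _, ?_⟩
        have hρ := hρmem.2
        intro i j hiT hij
        have hia : (i : ℕ) ≤ a := T.le_max' _ hiT
        by_cases hcase : (i : ℕ) = a
        · have hj : j = v := Fin.ext (by rw [hij, hcase])
          have hi : i = v.succAbove a₀ := by
            apply Fin.ext
            have h0 : (a₀ : ℕ) = a := rfl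
            have hv0 : (v : ℕ) = a + s := rfl
            rw [coe_succAbove]
            simp only [h0, hv0]
            split_ifs <;> omega
          rw [hj, hi, Gmap_succAbove v a₀ ρ a₀, Gmap_self v a₀ ρ]
          rw [coe_succAbove, if_pos, Fin.val_succ]
          rw [Fin.val_succ]
          omega
        · have hblt : (i : ℕ) < a := by omega
          have hi0 : (i : ℕ) < m := by omega
          have hj0 : (j : ℕ) < m := by omega
          have hi' : i = v.succAbove ⟨(i : ℕ), hi0⟩ := by
            apply Fin.ext
            rw [coe_succAbove, if_pos]
            show (i : ℕ) < a + s
            omega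
          have hj' : j = v.succAbove ⟨(j : ℕ), hj0⟩ := by
            apply Fin.ext
            rw [coe_succAbove, if_pos]
            show (j : ℕ) < a + s
            omega
          have hcons := hρ ⟨(i : ℕ), hi0⟩ ⟨(j : ℕ), hj0⟩
            (Finset.mem_erase.mpr ⟨hcase, hiT⟩) hij
          have hneq : (ρ ⟨(i : ℕ), hi0⟩ : ℕ) ≠ (ρ a₀ : ℕ) := by
            intro h
            have : (⟨(i : ℕ), hi0⟩ : Fin m) = a₀ := ρ.injective (Fin.ext h)
            exact hcase (congrArg Fin.val this)
          rw [hi', hj', Gmap_succAbove v a₀ ρ, Gmap_succAbove v a₀ ρ]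
          have hq := Fin.val_succ (ρ a₀)
          have c1 := coe_succAbove ((ρ a₀).succ) (ρ ⟨(i : ℕ), hi0⟩)
          have c2 := coe_succAbove ((ρ a₀).succ) (ρ ⟨(j : ℕ), hj0⟩)
          rw [c1, c2, hq]
          split_ifs <;> omega
      · -- left inverse
        intro σ hσmem
        rw [Finset.mem_coe, Finset.mem_filter] at hσmem
        have hσ := hσmem.2
        apply Gmap_Fmap
        have hq : (σ v : ℕ) = (σ a₁ : ℕ) + 1 := hσ a₁ v haT rfl
        have h1 := Fmap_spec v σ a₀
        have hva : v.succAbove a₀ = a₁ := by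
          apply Fin.ext
          have h0 : (a₀ : ℕ) = a := rfl
          have hv0 : (v : ℕ) = a + s := rfl
          have ha10 : (a₁ : ℕ) = a := rfl
          rw [coe_succAbove]
          simp only [h0, hv0, ha10]
          split_ifs <;> omega
        rw [hva] at h1
        have hc := congrArg Fin.val h1
        rw [coe_succAbove] at hc
        apply Fin.ext
        rw [Fin.val_succ]
        split_ifs at hc <;> omega
      · -- right inverse
        intro ρ _
        exact Fmap_Gmap v a₀ ρ
    rw [step, ih m (T.erase a) hT'card hbound']
    congr 1
    omega

end NavarreteAux

/-- The set of permutations `π` of `{0,…,n-1}` (equivalently `{1,…,n}`) such that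
`π (i+1) - π i ≠ s` for all valid indices `i`. -/
def noRise (s n : ℕ) : Finset (Equiv.Perm (Fin n)) :=
  Finset.univ.filter fun π =>
    ∀ i j : Fin n, (j : ℕ) = (i : ℕ) + 1 →
      ((π j : ℕ) : ℤ) - ((π i : ℕ) : ℤ) ≠ (s : ℤ)

/-- Navarrete's theorem: for `s ≥ 1` and `n ≥ s`,
`a_{1,s}(n) = Σ_{j=0}^{n-s} (-1)^j C(n-s,j) (n-j)!`. -/
theorem navarrete (s n : ℕ) (hs : 1 ≤ s) (hn : s ≤ n) :
    ((noRise s n).card : ℤ) =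
      ∑ j ∈ Finset.range (n - s + 1),
        (-1 : ℤ) ^ j * (n - s).choose j * (n - j).factorial := by
  classical
  set N := n - s with hN
  set bad : Equiv.Perm (Fin n) → Finset ℕ := fun σ =>
    (Finset.range N).filter fun a => ∀ i j : Fin n, (i : ℕ) = a → (j : ℕ) = a + s →
      (σ j : ℕ) = (σ i : ℕ) + 1 with hbad_def
  have hbad_subset : ∀ σ, bad σ ⊆ Finset.range N := fun σ => Finset.filter_subset _ _
  -- Step A : noRise ↔ bad = ∅ via π ↦ π.symm
  have stepA : (noRise s n).card
      = (Finset.univ.filter fun σ : Equiv.Perm (Fin n) => bad σ = ∅).card := by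
    apply Finset.card_nbij' (fun π => π.symm) (fun σ => σ.symm)
    · intro π hπ
      simp only [noRise, Finset.mem_coe, Finset.mem_filter, Finset.mem_univ, true_and] at hπ
      simp only [Finset.mem_coe, Finset.mem_filter, Finset.mem_univ, true_and]
      rw [Finset.eq_empty_iff_forall_notMem]
      intro a ha
      obtain ⟨haN, hprop⟩ := Finset.mem_filter.mp ha
      rw [Finset.mem_range] at haN
      have han : a < n := by omega
      have hasn : a + s < n := by omega
      have h1 := hprop ⟨a, han⟩ ⟨a + s, hasn⟩ rfl rfl
      -- h1 : (π.symm ⟨a+s⟩ : ℕ) = (π.symm ⟨a⟩ : ℕ) + 1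
      have h2 := hπ (π.symm ⟨a, han⟩) (π.symm ⟨a + s, hasn⟩) h1
      apply h2
      rw [Equiv.apply_symm_apply, Equiv.apply_symm_apply]
      push_cast
      ring
    · intro σ hσ
      simp only [Finset.mem_coe, Finset.mem_filter, Finset.mem_univ, true_and] at hσ
      simp only [noRise, Finset.mem_coe, Finset.mem_filter, Finset.mem_univ, true_and]
      intro i j hij hcon
      have hj' : (σ.symm j : ℕ) = (σ.symm i : ℕ) + s := by omega
      have haN : (σ.symm i : ℕ) < N := by
        have := (σ.symm j).isLt
        omega
      have hmem : (σ.symm i : ℕ) ∈ bad σ := by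
        refine Finset.mem_filter.mpr ⟨Finset.mem_range.mpr haN, ?_⟩
        intro i' j' hi' hj'2
        have hieq : i' = σ.symm i := Fin.ext hi'
        have hjeq : j' = σ.symm j := Fin.ext (by rw [hj'2, hj'])
        rw [hieq, hjeq, Equiv.apply_symm_apply, Equiv.apply_symm_apply]
        exact hij
      rw [hσ] at hmem
      exact absurd hmem (Finset.notMem_empty _)
    · intro π _; exact Equiv.symm_symm π
    · intro σ _; exact Equiv.symm_symm σ
  rw [stepA]
  -- Step B : card as alternating sum over powersets of bad sets
  have stepB : (((Finset.univ.filter fun σ : Equiv.Perm (Fin n) => bad σ = ∅).card : ℤ))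
      = ∑ σ : Equiv.Perm (Fin n), ∑ T ∈ (bad σ).powerset, (-1 : ℤ) ^ T.card := by
    rw [Finset.card_filter]
    push_cast
    refine Finset.sum_congr rfl fun σ _ => ?_
    rw [Finset.sum_powerset_neg_one_pow_card]
  rw [stepB]
  -- Step C : extend each inner sum to the full powerset
  have stepC : ∀ σ : Equiv.Perm (Fin n),
      (∑ T ∈ (bad σ).powerset, (-1 : ℤ) ^ T.card)
        = ∑ T ∈ (Finset.range N).powerset,
            if T ⊆ bad σ then (-1 : ℤ) ^ T.card else 0 := by
    intro σ
    have h : (Finset.range N).powerset.filter (fun T => T ⊆ bad σ) = (bad σ).powerset := by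
      ext U
      simp only [Finset.mem_filter, Finset.mem_powerset]
      constructor
      · rintro ⟨-, h⟩; exact h
      · intro h; exact ⟨h.trans (hbad_subset σ), h⟩
    rw [← h, Finset.sum_filter]
  rw [Finset.sum_congr rfl fun σ _ => stepC σ]
  rw [Finset.sum_comm]
  -- Step D : count permutations satisfying the constraints of each T
  have stepD : ∀ T ∈ (Finset.range N).powerset,
      (∑ σ : Equiv.Perm (Fin n), if T ⊆ bad σ then (-1 : ℤ) ^ T.card else 0)
        = (-1 : ℤ) ^ T.card * ((n - T.card).factorial : ℤ) := by
    intro T hT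
    have hTsub := Finset.mem_powerset.mp hT
    rw [← Finset.sum_filter]
    have hfilter_eq : (Finset.univ.filter fun σ : Equiv.Perm (Fin n) => T ⊆ bad σ)
        = Finset.univ.filter fun σ => NavarreteAux.Cons s T σ := by
      apply Finset.filter_congr
      intro σ _
      constructor
      · intro h i j hiT hij
        have hib := h hiT
        exact (Finset.mem_filter.mp hib).2 i j rfl hij
      · intro h b hbT
        refine Finset.mem_filter.mpr ⟨hTsub hbT, ?_⟩
        intro i j hi hj
        exact h i j (by rw [hi]; exact hbT) (by rw [hj, hi])
    rw [hfilter_eq, Finset.sum_const,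
      NavarreteAux.key s hs T.card n T rfl (fun a haT => by
        have := Finset.mem_range.mp (hTsub haT); omega)]
    simp [nsmul_eq_mul]
    ring
  rw [Finset.sum_congr rfl stepD]
  -- Step E : group subsets by cardinality
  rw [Finset.sum_powerset]
  refine Finset.sum_congr (by rw [Finset.card_range]) fun j hj => ?_
  rw [Finset.sum_congr rfl (fun T hT => by
    rw [(Finset.mem_powersetCard.mp hT).2]),
    Finset.sum_const, Finset.card_powersetCard, Finset.card_range]
  simp [nsmul_eq_mul]
  ring
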